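/- Let H be a finite simple graph with vertex set {u_1, …, u_p} (p ≥ 1) and let φ assign a positive integer to each vertex. Suppose that for each k ∈ [1, p], the vertex u_k has at most φ(u_k) − 1 neighbors among {u_j : j > k}. Then H contains an independent set Y with ∑_{y∈Y} φ(y) ≥ p. -/

import Mathlib

open Finset

theorem exists_heavy_independent_set_aux
    (p : ℕ) (H : SimpleGraph (Fin p)) [DecidableRel H.Adj]
    (φ : Fin p → ℤ) (hφ : ∀ k : Fin p, 0 < φ k)
    (hnb : ∀ k : Fin p,
      ((Finset.univ.filter fun j : Fin p => k < j ∧ H.Adj k j).card : ℤ) ≤ φ k - 1) :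
    ∀ S : Finset (Fin p), ∃ Y : Finset (Fin p), Y ⊆ S ∧
      (∀ a ∈ Y, ∀ b ∈ Y, ¬ H.Adj a b) ∧ (S.card : ℤ) ≤ ∑ y ∈ Y, φ y := by
  intro S
  induction S using Finset.strongInduction with
  | _ S ih =>
    rcases S.eq_empty_or_nonempty with rfl | hS
    · exact ⟨∅, by simp⟩
    · set m := S.min' hS with hm
      have hmS : m ∈ S := S.min'_mem hS
      set S' := S.filter (fun x => x ≠ m ∧ ¬ H.Adj m x) with hS'
      have hsub : S' ⊆ S := filter_subset _ _
      have hss : S' ⊂ S := by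
        refine ssubset_of_subset_of_ne hsub fun h => ?_
        have := h ▸ hmS
        simp [hS'] at this
      obtain ⟨Y', hY'sub, hY'ind, hY'sum⟩ := ih S' hss
      have hmY' : m ∉ Y' := fun h => by
        have := hY'sub h; simp [hS'] at this
      refine ⟨insert m Y', ?_, ?_, ?_⟩
      · intro x hx
        rcases mem_insert.mp hx with rfl | hx
        · exact hmS
        · exact hsub (hY'sub hx)
      · intro a ha b hb
        rcases mem_insert.mp ha with rfl | ha <;> rcases mem_insert.mp hb with rfl | hb
        · exact H.loopless.irrefl _
        · exact (mem_filter.mp (hY'sub hb)).2.2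
        · intro h; exact (mem_filter.mp (hY'sub ha)).2.2 h.symm
        · exact hY'ind a ha b hb
      · rw [Finset.sum_insert hmY']
        have hcard : S.card ≤ S'.card + (1 + (Finset.univ.filter
            fun j : Fin p => m < j ∧ H.Adj m j).card) := by
          have hsplit : S ⊆ S' ∪ insert m (Finset.univ.filter
              fun j : Fin p => m < j ∧ H.Adj m j) := by
            intro x hx
            by_cases hxS' : x ∈ S'
            · exact mem_union_left _ hxS'
            · refine mem_union_right _ ?_
              simp only [hS', mem_filter, not_and, not_not] at hxS'
              by_cases hxm : x = m
              · subst hxm; exact mem_insert_self _ _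
              · have hadj := hxS' hx hxm
                have hlt : m < x := lt_of_le_of_ne (S.min'_le x hx) (Ne.symm hxm)
                exact mem_insert_of_mem (by simp [hlt, hadj])
          calc S.card ≤ (S' ∪ insert m (Finset.univ.filter
                fun j : Fin p => m < j ∧ H.Adj m j)).card := card_le_card hsplit
            _ ≤ S'.card + (insert m (Finset.univ.filter
                fun j : Fin p => m < j ∧ H.Adj m j)).card := card_union_le _ _
            _ ≤ S'.card + (1 + _) := by
                gcongr
                exact (card_insert_le _ _).trans (by omega)
        have h1 : ((Finset.univ.filter fun j : Fin p => m < j ∧ H.Adj m j).card : ℤ)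
            ≤ φ m - 1 := hnb m
        have : (S.card : ℤ) ≤ (S'.card : ℤ) + 1 + ((Finset.univ.filter
            fun j : Fin p => m < j ∧ H.Adj m j).card : ℤ) := by
          exact_mod_cast by push_cast; omega
        linarith

/-- Let `H` be a finite simple graph on vertices `u_1, …, u_p` (here `Fin p`, `p ≥ 1`) and
`φ` a positive-integer weight on the vertices. If each vertex `k` has at most `φ k - 1`
neighbors among the later vertices `{j : j > k}`, then `H` contains an independent set `Y`
with `∑_{y ∈ Y} φ y ≥ p`. -/
theorem exists_heavy_independent_set
    (p : ℕ) (hp : 1 ≤ p) (H : SimpleGraph (Fin p)) [DecidableRel H.Adj]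
    (φ : Fin p → ℤ) (hφ : ∀ k : Fin p, 0 < φ k)
    (hnb : ∀ k : Fin p,
      ((Finset.univ.filter fun j : Fin p => k < j ∧ H.Adj k j).card : ℤ) ≤ φ k - 1) :
    ∃ Y : Finset (Fin p),
      (∀ a ∈ Y, ∀ b ∈ Y, ¬ H.Adj a b) ∧ (p : ℤ) ≤ ∑ y ∈ Y, φ y := by
  obtain ⟨Y, _, hind, hsum⟩ := exists_heavy_independent_set_aux p H φ hφ hnb Finset.univ
  exact ⟨Y, hind, by simpa using hsum⟩
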